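/- Suppose c is a stochastic map with amplification function A_c satisfying A_c(p₀) = p₀ and A_c'(p₀) > 1 for some p₀ ∈ (0,1). Then there exists a stochastic map f, built from c using composition with the maps m_r (mix with constant 1), duals (defined by A_{dual(c)}(p) = 1 - A_c(1-p)), and convex combinations, such that A_f(1/2) = 1/2 and A_f'(1/2) > 1. -/

import Mathlib

/-- The class of functions generated from `A` by the affine maps `p ↦ r·p + 1 - r`,
duality `f ↦ 1 - f(1 - ·)`, composition, and convex combination. -/
inductive Gen (A : ℝ → ℝ) : (ℝ → ℝ) → Prop
  | base : Gen A A
  | affine (r : ℝ) : r ∈ Set.Icc (0:ℝ) 1 → Gen A (fun p => r * p + 1 - r)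
  | dual (f : ℝ → ℝ) : Gen A f → Gen A (fun p => 1 - f (1 - p))
  | comp (f g : ℝ → ℝ) : Gen A f → Gen A g → Gen A (f ∘ g)
  | mix (f g : ℝ → ℝ) (t : ℝ) : t ∈ Set.Icc (0:ℝ) 1 → Gen A f → Gen A g →
      Gen A (fun p => t * f p + (1 - t) * g p)

theorem stmt13 (P : Polynomial ℝ) (A : ℝ → ℝ) (hA : A = fun p => P.eval p)
    (hmaps : Set.MapsTo A (Set.Icc 0 1) (Set.Icc 0 1))
    (p₀ : ℝ) (hp₀ : p₀ ∈ Set.Ioo (0:ℝ) 1) (hfix : A p₀ = p₀)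
    (hderiv : 1 < deriv A p₀) :
    ∃ B : ℝ → ℝ, Gen A B ∧ B (1/2) = 1/2 ∧ 1 < deriv B (1/2) := by
  have hdiffA : Differentiable ℝ A := by rw [hA]; exact P.differentiable
  obtain ⟨hp0, hp1⟩ := hp₀
  set D := deriv A p₀ with hDdef
  have hiter_fix : ∀ n, A^[n] p₀ = p₀ := fun n => Function.iterate_fixed hfix n
  have hiter_diff : ∀ n, Differentiable ℝ (A^[n]) := by
    intro n; induction n with
    | zero => simpa using differentiable_id
    | succ n ih => rw [Function.iterate_succ']; exact hdiffA.comp ih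
  have hiter_deriv : ∀ n, deriv (A^[n]) p₀ = D ^ n := by
    intro n; induction n with
    | zero => simp
    | succ n ih =>
      rw [Function.iterate_succ',
        deriv_comp _ hdiffA.differentiableAt ((hiter_diff n).differentiableAt),
        hiter_fix, ih]
      ring
  have hgen_iter : ∀ n, Gen A (A^[n+1]) := by
    intro n; induction n with
    | zero => simpa using Gen.base
    | succ n ih => rw [Function.iterate_succ']; exact Gen.comp _ _ Gen.base ih
  obtain ⟨s, c, hs, hgenh, hvalh⟩ :
      ∃ s c : ℝ, 0 < s ∧ Gen A (fun p => s * p + c) ∧ s * (1/2) + c = p₀ := by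
    rcases le_or_gt p₀ (1/2) with h | h
    · refine ⟨2*p₀, 0, by linarith, ?_, by ring⟩
      have hg := Gen.dual (A := A) _ (Gen.affine (2*p₀) ⟨by linarith, by linarith⟩)
      have he : (fun p => 1 - ((2*p₀) * (1-p) + 1 - (2*p₀))) = fun p => 2*p₀ * p + 0 := by
        funext p; ring
      rwa [he] at hg
    · refine ⟨2*(1-p₀), 1 - 2*(1-p₀), by linarith, ?_, by ring⟩
      have hg := Gen.affine (A := A) (2*(1-p₀)) ⟨by linarith, by linarith⟩
      have he : (fun p => (2*(1-p₀)) * p + 1 - (2*(1-p₀)))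
          = fun p => 2*(1-p₀) * p + (1 - 2*(1-p₀)) := by
        funext p; ring
      rwa [he] at hg
  obtain ⟨t, d, ht, hgenk, hvalk⟩ :
      ∃ t d : ℝ, 0 < t ∧ Gen A (fun p => t * p + d) ∧ t * p₀ + d = 1/2 := by
    rcases le_or_gt p₀ (1/2) with h | h
    · refine ⟨1/(2*(1-p₀)), 1 - 1/(2*(1-p₀)), div_pos one_pos (by linarith), ?_, ?_⟩
      · have hr : (1:ℝ)/(2*(1-p₀)) ∈ Set.Icc (0:ℝ) 1 := by
          constructor
          · exact le_of_lt (div_pos one_pos (by linarith))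
          · rw [div_le_one (by linarith)]; linarith
        have hg := Gen.affine (A := A) _ hr
        have he : (fun p => (1/(2*(1-p₀))) * p + 1 - (1/(2*(1-p₀))))
            = fun p => (1/(2*(1-p₀))) * p + (1 - 1/(2*(1-p₀))) := by funext p; ring
        rwa [he] at hg
      · have h1 : (1:ℝ) - p₀ ≠ 0 := by linarith
        field_simp
        ring
    · refine ⟨1/(2*p₀), 0, by positivity, ?_, ?_⟩
      · have hr : (1:ℝ)/(2*p₀) ∈ Set.Icc (0:ℝ) 1 :=
          ⟨by positivity, by rw [div_le_one (by linarith)]; linarith⟩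
        have hg := Gen.dual (A := A) _ (Gen.affine _ hr)
        have he : (fun p => 1 - ((1/(2*p₀)) * (1-p) + 1 - (1/(2*p₀))))
            = fun p => (1/(2*p₀)) * p + 0 := by funext p; ring
        rwa [he] at hg
      · have h1 : p₀ ≠ 0 := by linarith
        field_simp
        ring
  have hD1 : 1 < D := hderiv
  have hDpos : 0 < D := lt_trans one_pos hD1
  obtain ⟨n, hn⟩ := pow_unbounded_of_one_lt (1/(t*s)) hD1
  have hbig : 1 < t * s * D ^ (n+1) := by
    have h1 : 1/(t*s) < D^(n+1) := lt_of_lt_of_le hn (by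
      calc D^n = 1 * D^n := (one_mul _).symm
      _ ≤ D * D^n := by nlinarith [pow_pos hDpos n]
      _ = D^(n+1) := by ring)
    have hts : 0 < t*s := mul_pos ht hs
    calc (1:ℝ) = (1/(t*s)) * (t*s) := by field_simp
    _ < D^(n+1) * (t*s) := mul_lt_mul_of_pos_right h1 hts
    _ = t * s * D^(n+1) := by ring
  refine ⟨fun p => t * (A^[n+1] (s * p + c)) + d, ?_, ?_, ?_⟩
  · exact Gen.comp _ _ (Gen.comp _ _ hgenk (hgen_iter n)) hgenh
  · show t * (A^[n+1] (s * (1/2) + c)) + d = 1/2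
    rw [hvalh, hiter_fix, hvalk]
  · have hg : HasDerivAt (fun p : ℝ => s * p + c) s (1/2) := by
      simpa using ((hasDerivAt_id (1/2:ℝ)).const_mul s).add_const c
    have hF : HasDerivAt (A^[n+1]) (D^(n+1)) (s * (1/2) + c) := by
      rw [hvalh]
      have hh := ((hiter_diff (n+1)) p₀).hasDerivAt
      rwa [hiter_deriv] at hh
    have hB : HasDerivAt (fun p => t * (A^[n+1] (s * p + c)) + d)
        (t * (D^(n+1) * s)) (1/2) := by
          have hh := ((hF.comp (1/2) hg).const_mul t).add_const d
          exact hh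
    rw [hB.deriv, show t * (D^(n+1)*s) = t*s*D^(n+1) from by ring]
    exact hbig
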